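/- Let F and G be continuous cdfs with 1 - H = (1-F)(1-G), and let H^0(z) = P(Z ≤ z, δ = 0) where Z = min(X,Y), δ = 1{X ≤ Y}, X ~ F, Y ~ G independent. Then γ_0(x) = exp(∫_{z < x} dH^0(z)/(1 - H(z))) equals 1/(1 - G(x)) for all x with H(x) < 1. -/

import Mathlib

open MeasureTheory Filter

/-- The pushforward of the Stieltjes measure of a continuous cdf under itself is the
uniform distribution on `(0,1)`. -/
lemma map_stieltjes_self (G : StieltjesFunction ℝ) (hGc : Continuous G)
    (hG0 : Tendsto (G : ℝ → ℝ) atBot (nhds 0)) (hG1 : Tendsto (G : ℝ → ℝ) atTop (nhds 1)) :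
    Measure.map G G.measure = volume.restrict (Set.Ioo 0 1) := by
  have hGm : Measurable (G : ℝ → ℝ) := G.mono.measurable
  haveI := G.isProbabilityMeasure hG0 hG1
  haveI : IsProbabilityMeasure (Measure.map G G.measure) :=
    Measure.isProbabilityMeasure_map hGm.aemeasurable
  have hGnn : ∀ z, 0 ≤ G z := fun z => G.mono.le_of_tendsto hG0 z
  have hGle : ∀ z, G z ≤ 1 := fun z => G.mono.ge_of_tendsto hG1 z
  refine MeasureTheory.Measure.ext_of_Iic _ _ (fun t => ?_)
  rw [Measure.map_apply hGm measurableSet_Iic,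
    Measure.restrict_apply measurableSet_Iic]
  rcases lt_or_ge t 0 with ht | ht
  · have h1 : (G : ℝ → ℝ) ⁻¹' Set.Iic t = ∅ := by
      ext z; simp only [Set.mem_preimage, Set.mem_Iic, Set.mem_empty_iff_false, iff_false]
      exact fun h => absurd (le_trans (hGnn z) h) (not_le.2 ht)
    have h2 : Set.Iic t ∩ Set.Ioo (0:ℝ) 1 = ∅ := by
      ext y; simp only [Set.mem_inter_iff, Set.mem_Iic, Set.mem_Ioo,
        Set.mem_empty_iff_false, iff_false]
      rintro ⟨h1', h2', -⟩; linarith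
    rw [h1, h2]
    simp
  rcases lt_or_ge t 1 with ht1 | ht1
  · -- 0 ≤ t < 1
    have hRHS : Set.Iic t ∩ Set.Ioo (0:ℝ) 1 = Set.Ioc 0 t := by
      ext y
      simp only [Set.mem_inter_iff, Set.mem_Iic, Set.mem_Ioo, Set.mem_Ioc]
      exact ⟨fun h => ⟨h.2.1, h.1⟩, fun h => ⟨h.2, h.1, lt_of_le_of_lt h.2 ht1⟩⟩
    rw [hRHS, Real.volume_Ioc, sub_zero]
    obtain ⟨b, hb⟩ : ∃ b, t < G b := (hG1.eventually (eventually_gt_nhds ht1)).exists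
    set S : Set ℝ := (G : ℝ → ℝ) ⁻¹' Set.Iic t with hSdef
    have hSb : ∀ z ∈ S, z ≤ b := by
      intro z hz
      by_contra h
      push_neg at h
      exact absurd (le_trans (G.mono h.le) hz) (not_le.2 hb)
    rcases Set.eq_empty_or_nonempty S with hS | hS
    · have ht0 : t ≤ 0 := by
        refine ge_of_tendsto hG0 (Eventually.of_forall fun z => ?_)
        by_contra hzt
        push_neg at hzt
        exact Set.eq_empty_iff_forall_notMem.1 hS z hzt.le
      have : t = 0 := le_antisymm ht0 ht
      rw [hS, this]
      simp
    · have hSclosed : IsClosed S := isClosed_Iic.preimage hGc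
      set a := sSup S with ha
      have haS : a ∈ S := hSclosed.csSup_mem hS ⟨b, hSb⟩
      have hSa : S = Set.Iic a := by
        ext z
        constructor
        · exact fun hz => le_csSup ⟨b, hSb⟩ hz
        · intro hz
          exact le_trans (G.mono hz) haS
      have hGa : G a = t := by
        refine le_antisymm haS ?_
        have htend : Tendsto (G : ℝ → ℝ) (nhdsWithin a (Set.Ioi a)) (nhds (G a)) :=
          (hGc.tendsto a).mono_left nhdsWithin_le_nhds
        refine ge_of_tendsto htend ?_
        filter_upwards [self_mem_nhdsWithin] with z hz
        by_contra h
        push_neg at h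
        have : z ∈ S := h.le
        rw [hSa] at this
        exact absurd this (show ¬ z ≤ a from not_le.2 hz)
      rw [hSa, G.measure_Iic hG0, hGa, sub_zero]
  · -- t ≥ 1
    have h1 : (G : ℝ → ℝ) ⁻¹' Set.Iic t = Set.univ :=
      Set.eq_univ_of_forall fun z => le_trans (hGle z) ht1
    have h2 : Set.Iic t ∩ Set.Ioo (0:ℝ) 1 = Set.Ioo 0 1 := by
      refine Set.inter_eq_self_of_subset_right fun y hy => le_trans hy.2.le ht1
    rw [h1, h2, measure_univ, Real.volume_Ioo]
    norm_num

/-- For continuous cdfs `F, G` with `1 - H = (1-F)(1-G)` and the subdistribution measure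
`dH⁰ = (1-F) dG`, the function `γ₀(x) = exp(∫_{z<x} dH⁰(z)/(1-H(z)))` equals
`1/(1 - G(x))` for all `x` with `H(x) < 1`. -/
theorem stmt3 (F G : StieltjesFunction ℝ) (H : ℝ → ℝ)
    (hFc : Continuous F) (hGc : Continuous G)
    (hF0 : Tendsto (F : ℝ → ℝ) atBot (nhds 0)) (hG0 : Tendsto (G : ℝ → ℝ) atBot (nhds 0))
    (hF1 : Tendsto (F : ℝ → ℝ) atTop (nhds 1)) (hG1 : Tendsto (G : ℝ → ℝ) atTop (nhds 1))
    (hH : ∀ z, 1 - H z = (1 - F z) * (1 - G z))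
    (x : ℝ) (hx : H x < 1) :
    Real.exp (∫ z in Set.Iio x, (1 - F z) / (1 - H z) ∂G.measure) = 1 / (1 - G x) := by
  have hGm : Measurable (G : ℝ → ℝ) := G.mono.measurable
  have hGnn : ∀ z, 0 ≤ G z := fun z => G.mono.le_of_tendsto hG0 z
  have hGle : ∀ z, G z ≤ 1 := fun z => G.mono.ge_of_tendsto hG1 z
  have hFle : ∀ z, F z ≤ 1 := fun z => F.mono.ge_of_tendsto hF1 z
  have hprod : 0 < (1 - F x) * (1 - G x) := by rw [← hH]; linarith
  have hFx : F x < 1 ∧ G x < 1 := by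
    rcases mul_pos_iff.1 hprod with ⟨h1, h2⟩ | ⟨h1, h2⟩
    · exact ⟨by linarith, by linarith⟩
    · exact absurd h1 (not_lt.2 (by linarith [hFle x]))
  set c := G x with hc
  have hc0 : 0 ≤ c := hGnn x
  have hc1 : c < 1 := hFx.2
  -- Step 1: rewrite the integrand on `Iio x`
  have step1 : ∫ z in Set.Iio x, (1 - F z) / (1 - H z) ∂G.measure
      = ∫ z in Set.Iio x, (1 - G z)⁻¹ ∂G.measure := by
    refine setIntegral_congr_fun measurableSet_Iio (fun z hz => ?_)
    have hFz : 0 < 1 - F z := by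
      have := F.mono (le_of_lt hz)
      linarith [hFx.1]
    rw [hH z, div_mul_eq_div_div, div_self (ne_of_gt hFz), one_div]
  -- Step 2: replace `Iio x` by `{z | G z < c}` up to measure zero
  have hT : G.measure {z | G z = c} = 0 := by
    set T : Set ℝ := (G : ℝ → ℝ) ⁻¹' {c} with hTdef
    have hTclosed : IsClosed T := isClosed_singleton.preimage hGc
    have hxT : x ∈ T := rfl
    obtain ⟨b, hb⟩ : ∃ b, c < G b := (hG1.eventually (eventually_gt_nhds hc1)).exists
    have hTb : ∀ z ∈ T, z ≤ b := by
      intro z hz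
      by_contra h
      push_neg at h
      have : G b ≤ G z := G.mono h.le
      rw [Set.mem_preimage, Set.mem_singleton_iff] at hz
      rw [hz] at this
      exact absurd this (not_le.2 hb)
    set b' := sSup T with hb'
    have hb'T : b' ∈ T := hTclosed.csSup_mem ⟨x, hxT⟩ ⟨b, hTb⟩
    have hGb' : G b' = c := hb'T
    rcases eq_or_lt_of_le hc0 with hc0' | hc0'
    · -- c = 0
      have : T ⊆ Set.Iic b' := fun z hz => le_csSup ⟨b, hTb⟩ hz
      refine le_antisymm (le_trans (measure_mono this) ?_) zero_le
      rw [G.measure_Iic hG0, hGb', ← hc0']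
      simp
    · -- 0 < c
      obtain ⟨a', ha'⟩ : ∃ a', G a' < c := (hG0.eventually (eventually_lt_nhds hc0')).exists
      have hTa : ∀ z ∈ T, a' ≤ z := by
        intro z hz
        by_contra h
        push_neg at h
        rw [Set.mem_preimage, Set.mem_singleton_iff] at hz
        have : G z ≤ G a' := G.mono h.le
        rw [hz] at this
        exact absurd this (not_le.2 ha')
      set a := sInf T with ha
      have haT : a ∈ T := hTclosed.csInf_mem ⟨x, hxT⟩ ⟨a', hTa⟩
      have hGa : G a = c := haT
      have hsub : T ⊆ Set.Icc a b' := fun z hz =>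
        ⟨csInf_le ⟨a', hTa⟩ hz, le_csSup ⟨b, hTb⟩ hz⟩
      refine le_antisymm (le_trans (measure_mono hsub) ?_) zero_le
      rw [G.measure_Icc]
      have hleft : Function.leftLim (G : ℝ → ℝ) a = G a :=
        G.mono.continuousWithinAt_Iio_iff_leftLim_eq.1 (hGc.continuousAt).continuousWithinAt
      rw [hleft, hGa, hGb', sub_self]
      simp
  have step2 : ∫ z in Set.Iio x, (1 - G z)⁻¹ ∂G.measure
      = ∫ z in (G : ℝ → ℝ) ⁻¹' Set.Iio c, (1 - G z)⁻¹ ∂G.measure := by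
    refine setIntegral_congr_set ?_
    rw [MeasureTheory.ae_eq_set]
    constructor
    · refine le_antisymm (le_trans (measure_mono ?_) hT.le) zero_le
      intro z hz
      rcases hz with ⟨hz1, hz2⟩
      simp only [Set.mem_preimage, Set.mem_Iio, not_lt] at hz2
      exact le_antisymm (G.mono (le_of_lt hz1)) hz2
    · have : (G : ℝ → ℝ) ⁻¹' Set.Iio c \ Set.Iio x = ∅ := by
        ext z
        simp only [Set.mem_diff, Set.mem_preimage, Set.mem_Iio, not_lt,
          Set.mem_empty_iff_false, iff_false, not_and]
        intro h1 h2
        exact absurd (G.mono h2) (not_le.2 h1)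
      rw [this]
      exact measure_empty
  -- Step 3: change of variables
  have step3 : ∫ z in (G : ℝ → ℝ) ⁻¹' Set.Iio c, (1 - G z)⁻¹ ∂G.measure
      = ∫ t in Set.Ioo (0:ℝ) 1, (Set.Iio c).indicator (fun t => (1 - t)⁻¹) t := by
    rw [← integral_indicator (measurableSet_Iio.preimage hGm)]
    have heq : ∀ z, ((G : ℝ → ℝ) ⁻¹' Set.Iio c).indicator (fun z => (1 - G z)⁻¹) z
        = (Set.Iio c).indicator (fun t => (1 - t)⁻¹) (G z) := by
      intro z
      by_cases hz : G z < c
      · rw [Set.indicator_of_mem (by exact hz) , Set.indicator_of_mem (by exact hz)]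
      · rw [Set.indicator_of_notMem (by exact hz), Set.indicator_of_notMem (by exact hz)]
    simp_rw [heq]
    rw [← map_stieltjes_self G hGc hG0 hG1,
      integral_map hGm.aemeasurable]
    exact (((measurable_const.sub measurable_id).inv).indicator
      measurableSet_Iio).aestronglyMeasurable
  have step4 : ∫ t in Set.Ioo (0:ℝ) 1, (Set.Iio c).indicator (fun t => (1 - t)⁻¹) t
      = ∫ t in Set.Ioo (0:ℝ) c, (1 - t)⁻¹ := by
    have hset : Set.Iio c ∩ Set.Ioo (0:ℝ) 1 = Set.Ioo 0 c := by
      ext y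
      simp only [Set.mem_inter_iff, Set.mem_Iio, Set.mem_Ioo]
      exact ⟨fun h => ⟨h.2.1, h.1⟩, fun h => ⟨h.2, h.1, lt_of_lt_of_le h.2 hc1.le⟩⟩
    rw [integral_indicator measurableSet_Iio, Measure.restrict_restrict measurableSet_Iio, hset]
  have step5 : ∫ t in Set.Ioo (0:ℝ) c, (1 - t)⁻¹ = Real.log (1 / (1 - c)) := by
    rw [← integral_Ioc_eq_integral_Ioo, ← intervalIntegral.integral_of_le hc0]
    have : (∫ t in (0:ℝ)..c, (fun u => u⁻¹) (1 - t)) = ∫ u in (1 - c)..(1 - 0), (fun u => u⁻¹) u :=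
      intervalIntegral.integral_comp_sub_left (fun u => u⁻¹) 1
    simp only at this
    rw [this, sub_zero, integral_inv
      (Set.notMem_uIcc_of_lt (by linarith) (by norm_num))]
  rw [step1, step2, step3, step4, step5, Real.exp_log (one_div_pos.2 (by linarith))]
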